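/- There is a computable (indeed polynomial-time computable) function e mapping every CTL formula φ to a CTL formula e(φ) containing at most one propositional variable, such that e(φ) is satisfiable if and only if φ is satisfiable. -/

import Mathlib

/-- CTL formulas: variables, falsehood, implication, AX, ∀U, ∃U. -/
inductive CTL : Type where
  | var : ℕ → CTL
  | bot : CTL
  | imp : CTL → CTL → CTL
  | ax : CTL → CTL
  | au : CTL → CTL → CTL
  | eu : CTL → CTL → CTL

namespace CTL
def neg (φ : CTL) : CTL := imp φ bot
def top : CTL := imp bot bot
def conj (φ ψ : CTL) : CTL := neg (imp φ (neg ψ))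
def iffc (φ ψ : CTL) : CTL := conj (imp φ ψ) (imp ψ φ)
def ex (φ : CTL) : CTL := neg (ax (neg φ))
def ef (φ : CTL) : CTL := eu top φ
def ag (φ : CTL) : CTL := neg (ef (neg φ))
end CTL

/-- Serial Kripke models. -/
structure Kripke (S : Type) where
  rel : S → S → Prop
  serial : ∀ s, ∃ t, rel s t
  val : ℕ → S → Prop

def isPath {S : Type} (M : Kripke S) (π : ℕ → S) : Prop :=
  ∀ i, M.rel (π i) (π (i + 1))

/-- CTL satisfaction over serial Kripke models. -/
def sat {S : Type} (M : Kripke S) : CTL → S → Prop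
  | .var n, s => M.val n s
  | .bot, _ => False
  | .imp a b, s => sat M a s → sat M b s
  | .ax a, s => ∀ t, M.rel s t → sat M a t
  | .au a b, s => ∀ π, isPath M π → π 0 = s →
      ∃ i, sat M b (π i) ∧ ∀ j, j < i → sat M a (π j)
  | .eu a b, s => ∃ π, isPath M π ∧ π 0 = s ∧
      ∃ i, sat M b (π i) ∧ ∀ j, j < i → sat M a (π j)

def satisfiable (φ : CTL) : Prop := ∃ (S : Type) (M : Kripke S) (s : S), sat M φ s
def valid (φ : CTL) : Prop := ∀ (S : Type) (M : Kripke S) (s : S), sat M φ s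

/-- Variable q occurs in a formula. -/
def occurs (q : ℕ) : CTL → Prop
  | .var n => n = q
  | .bot => False
  | .imp a b => occurs q a ∨ occurs q b
  | .ax a => occurs q a
  | .au a b => occurs q a ∨ occurs q b
  | .eu a b => occurs q a ∨ occurs q b

/-- Uniform substitution of ψ for variable p. -/
def subst (p : ℕ) (ψ : CTL) : CTL → CTL
  | .var n => if n = p then ψ else .var n
  | .bot => .bot
  | .imp a b => .imp (subst p ψ a) (subst p ψ b)
  | .ax a => .ax (subst p ψ a)
  | .au a b => .au (subst p ψ a) (subst p ψ b)
  | .eu a b => .eu (subst p ψ a) (subst p ψ b)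

/-- The relativizing translation ·' with guard variable q. -/
def relTr (q : ℕ) : CTL → CTL
  | .var n => .var n
  | .bot => .bot
  | .imp a b => .imp (relTr q a) (relTr q b)
  | .ax a => .ax (.imp (.var q) (relTr q a))
  | .au a b => .au (relTr q a) (CTL.conj (.var q) (relTr q b))
  | .eu a b => .eu (relTr q a) (CTL.conj (.var q) (relTr q b))

/-- Θ = q ∧ AG(EX q ↔ q). -/
def Theta (q : ℕ) : CTL :=
  CTL.conj (.var q) (CTL.ag (CTL.iffc (CTL.ex (.var q)) (.var q)))

/-- Transition relation of the chain model M_m: state 0 = root r_m, state 1 = b^m,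
state i+1 = a_i for 1 ≤ i ≤ 2m; self-loops everywhere. -/
def chainRel (m : ℕ) (s t : Fin (2 * m + 2)) : Prop :=
  (s.val = 0 ∧ (t.val = 1 ∨ t.val = 2)) ∨
  (2 ≤ s.val ∧ s.val ≤ 2 * m ∧ t.val = s.val + 1) ∨
  t = s

/-- p is true exactly at the root and the even-indexed chain states a_{2j}. -/
def chainVal (m : ℕ) (s : Fin (2 * m + 2)) : Prop :=
  s.val = 0 ∨ (3 ≤ s.val ∧ s.val % 2 = 1)

def chainModel (m : ℕ) : Kripke (Fin (2 * m + 2)) where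
  rel := chainRel m
  serial := fun s => ⟨s, Or.inr (Or.inr rfl)⟩
  val := fun n s => n = 0 ∧ chainVal m s

def chainRoot (m : ℕ) : Fin (2 * m + 2) := ⟨0, by omega⟩

/-- χ₀ = ∀□p, χ_{k+1} = p ∧ EX(¬p ∧ EX χ_k); the single variable p is var 0. -/
def chi : ℕ → CTL
  | 0 => CTL.ag (.var 0)
  | k + 1 => CTL.conj (.var 0) (CTL.ex (CTL.conj (CTL.neg (.var 0)) (CTL.ex (chi k))))

/-- A_m = χ_m ∧ EX AG ¬p. -/
def Aform (m : ℕ) : CTL := CTL.conj (chi m) (CTL.ex (CTL.ag (CTL.neg (.var 0))))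

/-- B_m = EX A_m. -/
def Bform (m : ℕ) : CTL := CTL.ex (Aform m)

/-- The substitution σ : pᵢ ↦ Bᵢ for 1 ≤ i ≤ n+1. -/
def sigmaSub (n : ℕ) : CTL → CTL
  | .var i => if 1 ≤ i ∧ i ≤ n + 1 then Bform i else .var i
  | .bot => .bot
  | .imp a b => .imp (sigmaSub n a) (sigmaSub n b)
  | .ax a => .ax (sigmaSub n a)
  | .au a b => .au (sigmaSub n a) (sigmaSub n b)
  | .eu a b => .eu (sigmaSub n a) (sigmaSub n b)

/-- An injective coding of CTL formulas by natural numbers. -/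
def encodeCTL : CTL → ℕ
  | .var n => Nat.pair 0 n
  | .bot => Nat.pair 1 0
  | .imp a b => Nat.pair 2 (Nat.pair (encodeCTL a) (encodeCTL b))
  | .ax a => Nat.pair 3 (encodeCTL a)
  | .au a b => Nat.pair 4 (Nat.pair (encodeCTL a) (encodeCTL b))
  | .eu a b => Nat.pair 5 (Nat.pair (encodeCTL a) (encodeCTL b))

open Classical

namespace CTLEmb

variable {S S₁ S₂ : Type}

/-! ### Basic satisfaction lemmas -/

lemma sat_var {M : Kripke S} {i : ℕ} {s : S} : sat M (.var i) s ↔ M.val i s := Iff.rfl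

lemma sat_imp {M : Kripke S} {a b : CTL} {s : S} :
    sat M (.imp a b) s ↔ (sat M a s → sat M b s) := Iff.rfl

lemma sat_neg {M : Kripke S} {a : CTL} {s : S} : sat M (CTL.neg a) s ↔ ¬ sat M a s := by
  simp [CTL.neg, sat]

lemma sat_top {M : Kripke S} {s : S} : sat M CTL.top s := fun h => h

lemma sat_conj {M : Kripke S} {a b : CTL} {s : S} :
    sat M (CTL.conj a b) s ↔ sat M a s ∧ sat M b s := by
  simp [CTL.conj, CTL.neg, sat]

lemma sat_iffc {M : Kripke S} {a b : CTL} {s : S} :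
    sat M (CTL.iffc a b) s ↔ (sat M a s ↔ sat M b s) := by
  simp [CTL.iffc, sat_conj, sat]; tauto

lemma sat_ax {M : Kripke S} {a : CTL} {s : S} :
    sat M (.ax a) s ↔ ∀ t, M.rel s t → sat M a t := Iff.rfl

lemma sat_ex {M : Kripke S} {a : CTL} {s : S} :
    sat M (CTL.ex a) s ↔ ∃ t, M.rel s t ∧ sat M a t := by
  simp [CTL.ex, CTL.neg, sat]

lemma sat_au {M : Kripke S} {a b : CTL} {s : S} :
    sat M (.au a b) s ↔ ∀ π, isPath M π → π 0 = s →
      ∃ i, sat M b (π i) ∧ ∀ j, j < i → sat M a (π j) := Iff.rfl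

lemma sat_eu {M : Kripke S} {a b : CTL} {s : S} :
    sat M (.eu a b) s ↔ ∃ π, isPath M π ∧ π 0 = s ∧
      ∃ i, sat M b (π i) ∧ ∀ j, j < i → sat M a (π j) := Iff.rfl

lemma sat_ag {M : Kripke S} {a : CTL} {s : S} :
    sat M (CTL.ag a) s ↔ ∀ π, isPath M π → π 0 = s → ∀ i, sat M a (π i) := by
  simp only [CTL.ag, CTL.ef, sat_neg, sat_eu, not_exists]
  constructor
  · intro H π hπ h0 i
    by_contra hc
    exact H π ⟨hπ, h0, i, sat_neg.2 hc, fun j _ => sat_top⟩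
  · rintro H π ⟨hπ, h0, i, hb, -⟩
    exact sat_neg.1 hb (H π hπ h0 i)

/-! ### Path machinery -/

noncomputable def nextS (M : Kripke S) (s : S) : S := (M.serial s).choose

lemma nextS_rel (M : Kripke S) (s : S) : M.rel s (nextS M s) := (M.serial s).choose_spec

lemma iter_path (M : Kripke S) (w : S) : isPath M (fun i => (nextS M)^[i] w) := by
  intro i
  simp only [Function.iterate_succ_apply']
  exact nextS_rel M _

lemma path_reach {M : Kripke S} {π : ℕ → S} (hπ : isPath M π) (i : ℕ) :
    Relation.ReflTransGen M.rel (π 0) (π i) := by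
  induction i with
  | zero => exact .refl
  | succ i ih => exact ih.tail (hπ i)

lemma path_extend {M : Kripke S} {π : ℕ → S} {i : ℕ} {w' : S}
    (hπ : isPath M π) (h : M.rel (π i) w') :
    ∃ π', isPath M π' ∧ (∀ j, j ≤ i → π' j = π j) ∧ π' (i+1) = w' := by
  refine ⟨fun j => if j ≤ i then π j else (nextS M)^[j - (i+1)] w', ?_,
    fun j hj => if_pos hj, by simp⟩
  intro j
  rcases lt_trichotomy j i with h1 | h1 | h1
  · simp only [if_pos h1.le, if_pos (Nat.succ_le_of_lt h1)]
    exact hπ j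
  · subst h1
    simp only [if_pos (le_refl j), if_neg (by omega : ¬ j + 1 ≤ j)]
    simpa using h
  · have h2 : ¬ j ≤ i := by omega
    have h3 : ¬ j + 1 ≤ i := by omega
    simp only [if_neg h2, if_neg h3]
    have : j + 1 - (i+1) = (j - (i+1)) + 1 := by omega
    rw [this, Function.iterate_succ_apply']
    exact nextS_rel M _

lemma reach_path {M : Kripke S} {s w : S} (h : Relation.ReflTransGen M.rel s w) :
    ∃ π i, isPath M π ∧ π 0 = s ∧ π i = w := by
  induction h with
  | refl => exact ⟨fun i => (nextS M)^[i] s, 0, iter_path M s, rfl, rfl⟩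
  | tail h1 h2 ih =>
    obtain ⟨π, i, hπ, h0, hi⟩ := ih
    rw [← hi] at h2
    obtain ⟨π', hπ', hagr, hend⟩ := path_extend hπ h2
    exact ⟨π', i+1, hπ', by rw [hagr 0 (Nat.zero_le _), h0], hend⟩

lemma satAg_iff {M : Kripke S} {a : CTL} {s : S} :
    sat M (CTL.ag a) s ↔ ∀ w, Relation.ReflTransGen M.rel s w → sat M a w := by
  rw [sat_ag]
  constructor
  · intro H w hw
    obtain ⟨π, i, hπ, h0, hi⟩ := reach_path hw
    rw [← hi]; exact H π hπ h0 i
  · intro H π hπ h0 i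
    exact H _ (h0 ▸ path_reach hπ i)

lemma rtg_fix {r : S → S → Prop} {w u : S} (hfix : ∀ u, r w u → u = w)
    (h : Relation.ReflTransGen r w u) : u = w := by
  induction h with
  | refl => rfl
  | tail h1 h2 ih => rw [ih] at h2; exact hfix _ h2

end CTLEmb
namespace CTLEmb

/-! ### The translation -/

/-- Relativizing translation with built-in variable shift `i ↦ i+1`. -/
def tr (q : ℕ) : CTL → CTL
  | .var n => .var (n+1)
  | .bot => .bot
  | .imp a b => .imp (tr q a) (tr q b)
  | .ax a => .ax (.imp (.var q) (tr q a))
  | .au a b => .au (.imp (.var q) (tr q a)) (.imp (.var q) (tr q b))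
  | .eu a b => .eu (tr q a) (CTL.conj (.var q) (tr q b))

/-- The single-variable translation. -/
def eFun (φ : CTL) : CTL :=
  sigmaSub (encodeCTL φ + 1)
    (CTL.conj (Theta (encodeCTL φ + 1 + 1)) (tr (encodeCTL φ + 1 + 1) φ))

/-! ### Occurrence lemmas -/

lemma occ_var {j i : ℕ} : occurs j (.var i) ↔ i = j := Iff.rfl
lemma occ_bot {j : ℕ} : ¬ occurs j .bot := fun h => h
lemma occ_imp {j : ℕ} {a b : CTL} : occurs j (.imp a b) ↔ occurs j a ∨ occurs j b := Iff.rfl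
lemma occ_ax {j : ℕ} {a : CTL} : occurs j (.ax a) ↔ occurs j a := Iff.rfl
lemma occ_au {j : ℕ} {a b : CTL} : occurs j (.au a b) ↔ occurs j a ∨ occurs j b := Iff.rfl
lemma occ_eu {j : ℕ} {a b : CTL} : occurs j (.eu a b) ↔ occurs j a ∨ occurs j b := Iff.rfl

lemma occ_neg {j : ℕ} {a : CTL} : occurs j (CTL.neg a) ↔ occurs j a := by
  simp [CTL.neg, occ_imp, occ_bot, occurs]

lemma occ_conj {j : ℕ} {a b : CTL} : occurs j (CTL.conj a b) ↔ occurs j a ∨ occurs j b := by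
  simp [CTL.conj, occ_neg, occ_imp]

lemma occ_iffc {j : ℕ} {a b : CTL} : occurs j (CTL.iffc a b) ↔ occurs j a ∨ occurs j b := by
  simp [CTL.iffc, occ_conj, occ_imp]; tauto

lemma occ_ex {j : ℕ} {a : CTL} : occurs j (CTL.ex a) ↔ occurs j a := by
  simp [CTL.ex, occ_neg, occ_ax]

lemma occ_top {j : ℕ} : ¬ occurs j CTL.top := by
  simp [CTL.top, occ_imp, occ_bot, occurs]

lemma occ_ag {j : ℕ} {a : CTL} : occurs j (CTL.ag a) ↔ occurs j a := by
  simp [CTL.ag, CTL.ef, occ_neg, occ_eu, occ_top, occurs]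

lemma occ_chi {j k : ℕ} (h : occurs j (chi k)) : j = 0 := by
  induction k with
  | zero =>
    rw [chi, occ_ag, occ_var] at h
    omega
  | succ k ih =>
    rw [chi, occ_conj, occ_var, occ_ex, occ_conj, occ_neg, occ_var, occ_ex] at h
    rcases h with h | (h | h)
    · omega
    · omega
    · exact ih h

lemma occ_B {j m : ℕ} (h : occurs j (Bform m)) : j = 0 := by
  rw [Bform, occ_ex, Aform, occ_conj, occ_ex, occ_ag, occ_neg, occ_var] at h
  rcases h with h | h
  · exact occ_chi h
  · omega

lemma occ_theta {j q : ℕ} (h : occurs j (Theta q)) : j = q := by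
  rw [Theta, occ_conj, occ_ag, occ_iffc, occ_ex, occ_var] at h
  rcases h with h | (h | h) <;> omega

lemma occ_tr {j q : ℕ} {ψ : CTL} (h : occurs j (tr q ψ)) :
    j = q ∨ ∃ i, occurs i ψ ∧ j = i + 1 := by
  induction ψ with
  | var n => rw [tr, occ_var] at h; exact Or.inr ⟨n, rfl, h.symm⟩
  | bot => exact absurd h occ_bot
  | imp a b iha ihb =>
    rw [tr, occ_imp] at h
    rcases h with h | h
    · rcases iha h with h | ⟨i, hi⟩
      · exact Or.inl h
      · exact Or.inr ⟨i, Or.inl hi.1, hi.2⟩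
    · rcases ihb h with h | ⟨i, hi⟩
      · exact Or.inl h
      · exact Or.inr ⟨i, Or.inr hi.1, hi.2⟩
  | ax a iha =>
    rw [tr, occ_ax, occ_imp, occ_var] at h
    rcases h with h | h
    · exact Or.inl h.symm
    · exact iha h
  | au a b iha ihb =>
    rw [tr, occ_au, occ_imp, occ_imp, occ_var] at h
    rcases h with (h | h) | (h | h)
    · exact Or.inl h.symm
    · rcases iha h with h | ⟨i, hi⟩
      · exact Or.inl h
      · exact Or.inr ⟨i, Or.inl hi.1, hi.2⟩
    · exact Or.inl h.symm
    · rcases ihb h with h | ⟨i, hi⟩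
      · exact Or.inl h
      · exact Or.inr ⟨i, Or.inr hi.1, hi.2⟩
  | eu a b iha ihb =>
    rw [tr, occ_eu, occ_conj, occ_var] at h
    rcases h with h | (h | h)
    · rcases iha h with h | ⟨i, hi⟩
      · exact Or.inl h
      · exact Or.inr ⟨i, Or.inl hi.1, hi.2⟩
    · exact Or.inl h.symm
    · rcases ihb h with h | ⟨i, hi⟩
      · exact Or.inl h
      · exact Or.inr ⟨i, Or.inr hi.1, hi.2⟩

lemma occ_sigma {j n : ℕ} {ψ : CTL} (h : occurs j (sigmaSub n ψ)) :
    j = 0 ∨ (occurs j ψ ∧ ¬ (1 ≤ j ∧ j ≤ n + 1)) := by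
  induction ψ with
  | var i =>
    rw [sigmaSub] at h
    split at h
    · exact Or.inl (occ_B h)
    · rw [occ_var] at h
      subst h
      rename_i hcond
      exact Or.inr ⟨rfl, hcond⟩
  | bot => exact absurd h occ_bot
  | imp a b iha ihb =>
    rw [sigmaSub, occ_imp] at h
    rcases h with h | h
    · rcases iha h with h | h
      · exact Or.inl h
      · exact Or.inr ⟨Or.inl h.1, h.2⟩
    · rcases ihb h with h | h
      · exact Or.inl h
      · exact Or.inr ⟨Or.inr h.1, h.2⟩
  | ax a iha =>
    rw [sigmaSub, occ_ax] at h
    exact iha h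
  | au a b iha ihb =>
    rw [sigmaSub, occ_au] at h
    rcases h with h | h
    · rcases iha h with h | h
      · exact Or.inl h
      · exact Or.inr ⟨Or.inl h.1, h.2⟩
    · rcases ihb h with h | h
      · exact Or.inl h
      · exact Or.inr ⟨Or.inr h.1, h.2⟩
  | eu a b iha ihb =>
    rw [sigmaSub, occ_eu] at h
    rcases h with h | h
    · rcases iha h with h | h
      · exact Or.inl h
      · exact Or.inr ⟨Or.inl h.1, h.2⟩
    · rcases ihb h with h | h
      · exact Or.inl h
      · exact Or.inr ⟨Or.inr h.1, h.2⟩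

lemma occ_le_encode {i : ℕ} {ψ : CTL} (h : occurs i ψ) : i ≤ encodeCTL ψ := by
  induction ψ with
  | var n =>
    rw [occ_var] at h
    rw [← h]
    exact Nat.right_le_pair 0 n
  | bot => exact absurd h occ_bot
  | imp a b iha ihb =>
    rcases h with h | h
    · exact le_trans (le_trans (iha h) (Nat.left_le_pair _ _)) (Nat.right_le_pair _ _)
    · exact le_trans (le_trans (ihb h) (Nat.right_le_pair _ _)) (Nat.right_le_pair _ _)
  | ax a iha =>
    exact le_trans (iha h) (Nat.right_le_pair _ _)
  | au a b iha ihb =>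
    rcases h with h | h
    · exact le_trans (le_trans (iha h) (Nat.left_le_pair _ _)) (Nat.right_le_pair _ _)
    · exact le_trans (le_trans (ihb h) (Nat.right_le_pair _ _)) (Nat.right_le_pair _ _)
  | eu a b iha ihb =>
    rcases h with h | h
    · exact le_trans (le_trans (iha h) (Nat.left_le_pair _ _)) (Nat.right_le_pair _ _)
    · exact le_trans (le_trans (ihb h) (Nat.right_le_pair _ _)) (Nat.right_le_pair _ _)

lemma occ_eFun {j : ℕ} {φ : CTL} (h : occurs j (eFun φ)) : j = 0 := by
  rcases occ_sigma h with h0 | ⟨hocc, hcond⟩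
  · exact h0
  · exfalso
    apply hcond
    rcases occ_conj.1 hocc with h1 | h1
    · have := occ_theta h1
      omega
    · rcases occ_tr h1 with h1 | ⟨i, hi, hij⟩
      · omega
      · have := occ_le_encode hi
        omega

/-! ### Substitution lemma -/

/-- Revaluing a model by the `Bform` formulas. -/
def reval (N : Kripke S) (n : ℕ) : Kripke S where
  rel := N.rel
  serial := N.serial
  val := fun i s => if 1 ≤ i ∧ i ≤ n + 1 then sat N (Bform i) s else N.val i s

lemma reval_val (N : Kripke S) (nn i : ℕ) (w : S) (h : 1 ≤ i ∧ i ≤ nn + 1) :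
    (reval N nn).val i w ↔ sat N (Bform i) w := by
  show (if 1 ≤ i ∧ i ≤ nn + 1 then sat N (Bform i) w else N.val i w) ↔ _
  rw [if_pos h]

lemma sat_sigma (N : Kripke S) (n : ℕ) :
    ∀ ψ s, sat N (sigmaSub n ψ) s ↔ sat (reval N n) ψ s := by
  intro ψ
  induction ψ with
  | var i =>
    intro s
    simp only [sigmaSub]
    split
    · rename_i hcond
      simp only [sat_var, reval, if_pos hcond]
    · rename_i hcond
      simp only [sat_var, reval, if_neg hcond]
  | bot => intro s; exact Iff.rfl
  | imp a b iha ihb => intro s; simp only [sigmaSub, sat_imp, iha, ihb]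
  | ax a iha =>
    intro s
    simp only [sigmaSub, sat_ax]
    exact forall_congr' fun t => imp_congr Iff.rfl (iha t)
  | au a b iha ihb =>
    intro s
    simp only [sigmaSub, sat_au]
    constructor
    · intro H π hπ h0
      obtain ⟨i, hb, ha⟩ := H π hπ h0
      exact ⟨i, (ihb _).1 hb, fun j hj => (iha _).1 (ha j hj)⟩
    · intro H π hπ h0
      obtain ⟨i, hb, ha⟩ := H π hπ h0
      exact ⟨i, (ihb _).2 hb, fun j hj => (iha _).2 (ha j hj)⟩
  | eu a b iha ihb =>
    intro s
    simp only [sigmaSub, sat_eu]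
    constructor
    · rintro ⟨π, hπ, h0, i, hb, ha⟩
      exact ⟨π, hπ, h0, i, (ihb _).1 hb, fun j hj => (iha _).1 (ha j hj)⟩
    · rintro ⟨π, hπ, h0, i, hb, ha⟩
      exact ⟨π, hπ, h0, i, (ihb _).2 hb, fun j hj => (iha _).2 (ha j hj)⟩

end CTLEmb
namespace CTLEmb

variable {S : Type}

/-- Splicing a finite region-prefix into an infinite path. -/
lemma splice_path (K : Kripke S) (x : ℕ → S) (k : ℕ) (hk : 0 < k)
    (hx : ∀ j, j + 1 < k → K.rel (x j) (x (j+1))) :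
    ∃ τ : ℕ → S, isPath K τ ∧ ∀ j, j < k → τ j = x j := by
  refine ⟨fun j => if j < k then x j else (nextS K)^[j - (k-1)] (x (k-1)), ?_,
    fun j hj => if_pos hj⟩
  intro j
  by_cases h1 : j + 1 < k
  · simp only [if_pos h1, if_pos (by omega : j < k)]
    exact hx j h1
  · by_cases h2 : j < k
    · have hj : j = k - 1 := by omega
      simp only [if_pos h2, if_neg h1]
      subst hj
      have : k - 1 + 1 - (k - 1) = 1 := by omega
      rw [this]
      simpa using nextS_rel K _
    · simp only [if_neg h1, if_neg h2]
      have : j + 1 - (k-1) = (j - (k-1)) + 1 := by omega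
      rw [this, Function.iterate_succ_apply']
      exact nextS_rel K _

/-- The relativized submodel on reachable `q`-states, with valuations shifted down. -/
def Kmod (N : Kripke S) (t : S) (q : ℕ)
    (hser : ∀ w, Relation.ReflTransGen N.rel t w → N.val q w → ∃ w', N.rel w w' ∧ N.val q w') :
    Kripke {w : S // Relation.ReflTransGen N.rel t w ∧ N.val q w} where
  rel a b := N.rel a.1 b.1
  serial a := by
    obtain ⟨w', h1, h2⟩ := hser a.1 a.2.1 a.2.2
    exact ⟨⟨w', a.2.1.tail h1, h2⟩, h1⟩
  val i a := N.val (i+1) a.1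

theorem rel_main (N : Kripke S) (t : S) (q : ℕ)
    (hser : ∀ w, Relation.ReflTransGen N.rel t w → N.val q w → ∃ w', N.rel w w' ∧ N.val q w')
    (hcl : ∀ w, Relation.ReflTransGen N.rel t w → ¬ N.val q w →
      ∀ w', N.rel w w' → ¬ N.val q w') (φ : CTL) :
    ∀ w (h : Relation.ReflTransGen N.rel t w ∧ N.val q w),
      sat N (tr q φ) w ↔ sat (Kmod N t q hser) φ ⟨w, h⟩ := by
  set K := Kmod N t q hser with hK
  induction φ with
  | var i => intro w h; exact Iff.rfl
  | bot => intro w h; exact Iff.rfl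
  | imp a b iha ihb =>
    intro w h
    rw [tr, sat_imp, sat_imp, iha w h, ihb w h]
  | ax a iha =>
    intro w h
    rw [tr, sat_ax]
    constructor
    · intro H b hb
      exact (iha b.1 b.2).1 (H b.1 hb b.2.2)
    · intro H w' hw' hq'
      exact (iha w' ⟨h.1.tail hw', hq'⟩).2 (H ⟨w', h.1.tail hw', hq'⟩ hw')
  | au a b iha ihb =>
    intro w h
    rw [tr, sat_au]
    constructor
    · intro H σ hσ hσ0
      have hπ : isPath N (fun i => (σ i).1) := fun i => hσ i
      obtain ⟨i, hb, ha⟩ := H _ hπ (by rw [hσ0])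
      refine ⟨i, (ihb (σ i).1 (σ i).2).1 (hb (σ i).2.2), fun j hj => ?_⟩
      exact (iha (σ j).1 (σ j).2).1 (ha j hj (σ j).2.2)
    · intro H π hπ hπ0
      have hr : ∀ i, Relation.ReflTransGen N.rel t (π i) := by
        intro i
        induction i with
        | zero => rw [hπ0]; exact h.1
        | succ i ih => exact ih.tail (hπ i)
      by_cases hall : ∀ i, N.val q (π i)
      · have hσ : isPath K (fun i => (⟨π i, hr i, hall i⟩ : {w // _ ∧ _})) := fun i => hπ i
        obtain ⟨i, hb, ha⟩ := H _ hσ (Subtype.ext hπ0)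
        refine ⟨i, fun _ => (ihb (π i) ⟨hr i, hall i⟩).2 hb, fun j hj _ => ?_⟩
        exact (iha (π j) ⟨hr j, hall j⟩).2 (ha j hj)
      · push_neg at hall
        have hex : ∃ i, ¬ N.val q (π i) := hall
        set k := Nat.find hex with hkdef
        have hk : ¬ N.val q (π k) := Nat.find_spec hex
        have hmin : ∀ j, j < k → N.val q (π j) := fun j hj => by
          by_contra hc
          have := Nat.find_le (h := hex) hc
          omega
        have hk0 : 0 < k := by
          rcases Nat.eq_zero_or_pos k with h0 | h0
          · exfalso; apply hk; rw [h0, hπ0]; exact h.2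
          · exact h0
        set x : ℕ → {w // Relation.ReflTransGen N.rel t w ∧ N.val q w} :=
          fun j => if hj : j < k then ⟨π j, hr j, hmin j hj⟩
            else ⟨π 0, hr 0, hmin 0 hk0⟩ with hx
        obtain ⟨τ, hτ, hτx⟩ := splice_path K x k hk0 (by
          intro j hj
          have e1 : x j = ⟨π j, hr j, hmin j (by omega)⟩ := dif_pos (by omega)
          have e2 : x (j+1) = ⟨π (j+1), hr (j+1), hmin (j+1) hj⟩ := dif_pos hj
          rw [e1, e2]
          exact hπ j)
        have hτval : ∀ j, j < k → (τ j).1 = π j := by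
          intro j hj
          rw [hτx j hj, hx]
          simp [dif_pos hj]
        obtain ⟨i, hb, ha⟩ := H τ hτ (by
          apply Subtype.ext
          rw [hτval 0 hk0, hπ0])
        by_cases hik : i < k
        · refine ⟨i, fun hq' => ?_, fun j hj hq' => ?_⟩
          · have := (ihb (τ i).1 (τ i).2).2 hb
            rwa [hτval i hik] at this
          · have := (iha (τ j).1 (τ j).2).2 (ha j hj)
            rwa [hτval j (by omega)] at this
        · refine ⟨k, fun hq' => absurd hq' hk, fun j hj hq' => ?_⟩
          have := (iha (τ j).1 (τ j).2).2 (ha j (by omega))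
          rwa [hτval j hj] at this
  | eu a b iha ihb =>
    intro w h
    rw [tr, sat_eu]
    constructor
    · rintro ⟨π, hπ, hπ0, i, hb, ha⟩
      rw [sat_conj] at hb
      have hr : ∀ j, Relation.ReflTransGen N.rel t (π j) := by
        intro j
        induction j with
        | zero => rw [hπ0]; exact h.1
        | succ j ih => exact ih.tail (hπ j)
      have hq : ∀ j, j ≤ i → N.val q (π j) := by
        intro j hj
        by_contra hc
        have : ∀ l, j ≤ l → ¬ N.val q (π l) := by
          intro l hl
          induction l with
          | zero =>
            have : j = 0 := by omega
            rwa [this] at hc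
          | succ l ih =>
            rcases Nat.lt_or_ge j (l+1) with h1 | h1
            · exact hcl (π l) (hr l) (ih (by omega)) _ (hπ l)
            · have : j = l + 1 := by omega
              rwa [this] at hc
        exact this i hj hb.1
      set x : ℕ → {w // Relation.ReflTransGen N.rel t w ∧ N.val q w} :=
        fun j => if hj : j ≤ i then ⟨π j, hr j, hq j hj⟩
          else ⟨π 0, hr 0, hq 0 (Nat.zero_le _)⟩ with hx
      obtain ⟨τ, hτ, hτx⟩ := splice_path K x (i+1) (Nat.succ_pos _) (by
        intro j hj
        have e1 : x j = ⟨π j, hr j, hq j (by omega)⟩ := dif_pos (by omega)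
        have e2 : x (j+1) = ⟨π (j+1), hr (j+1), hq (j+1) (by omega)⟩ := dif_pos (by omega)
        rw [e1, e2]
        exact hπ j)
      have hτval : ∀ j, j ≤ i → (τ j).1 = π j := by
        intro j hj
        rw [hτx j (by omega), hx]
        simp [dif_pos hj]
      refine ⟨τ, hτ, ?_, i, ?_, ?_⟩
      · apply Subtype.ext
        rw [hτval 0 (Nat.zero_le _), hπ0]
      · have h2 : sat N (tr q b) (τ i).1 := by rw [hτval i (le_refl i)]; exact hb.2
        exact (ihb (τ i).1 (τ i).2).1 h2
      · intro j hj
        have h2 : sat N (tr q a) (τ j).1 := by rw [hτval j (by omega)]; exact ha j hj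
        exact (iha (τ j).1 (τ j).2).1 h2
    · rintro ⟨σ, hσ, hσ0, i, hb, ha⟩
      refine ⟨fun j => (σ j).1, fun j => hσ j, by show (σ 0).1 = w; rw [hσ0], i, ?_, ?_⟩
      · rw [sat_conj]
        exact ⟨(σ i).2.2, (ihb (σ i).1 (σ i).2).2 hb⟩
      · intro j hj
        exact (iha (σ j).1 (σ j).2).2 (ha j hj)

end CTLEmb
namespace CTLEmb

variable {S₁ S₂ : Type}

lemma lift_path (M₁ : Kripke S₁) (M₂ : Kripke S₂) (f : S₁ → S₂)
    (h2 : ∀ a c, M₂.rel (f a) c → ∃ b, M₁.rel a b ∧ f b = c)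
    (a : S₁) (π : ℕ → S₂) (hπ : isPath M₂ π) (h0 : π 0 = f a) :
    ∃ σ : ℕ → S₁, isPath M₁ σ ∧ σ 0 = a ∧ ∀ j, f (σ j) = π j := by
  choose g hg1 hg2 using h2
  let l : (j : ℕ) → {b : S₁ // f b = π j} := fun j =>
    Nat.rec (motive := fun j => {b : S₁ // f b = π j}) ⟨a, h0.symm⟩
      (fun j ih => ⟨g ih.1 (π (j+1)) (ih.2.symm ▸ hπ j), hg2 _ _ _⟩) j
  refine ⟨fun j => (l j).1, ?_, rfl, fun j => (l j).2⟩
  intro j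
  exact hg1 _ _ _

theorem bisim (M₁ : Kripke S₁) (M₂ : Kripke S₂) (f : S₁ → S₂)
    (h1 : ∀ a b, M₁.rel a b → M₂.rel (f a) (f b))
    (h2 : ∀ a c, M₂.rel (f a) c → ∃ b, M₁.rel a b ∧ f b = c) :
    ∀ φ, (∀ i, occurs i φ → ∀ a, (M₁.val i a ↔ M₂.val i (f a))) →
      ∀ a, (sat M₁ φ a ↔ sat M₂ φ (f a)) := by
  intro φ
  induction φ with
  | var i => intro hv a; exact hv i rfl a
  | bot => intro _ a; exact Iff.rfl
  | imp a b iha ihb =>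
    intro hv s
    rw [sat_imp, sat_imp, iha (fun i hi => hv i (Or.inl hi)) s,
      ihb (fun i hi => hv i (Or.inr hi)) s]
  | ax a iha =>
    intro hv s
    rw [sat_ax, sat_ax]
    constructor
    · intro H c hc
      obtain ⟨b, hb, rfl⟩ := h2 s c hc
      exact (iha hv b).1 (H b hb)
    · intro H b hb
      exact (iha hv b).2 (H (f b) (h1 s b hb))
  | au a b iha ihb =>
    intro hv s
    have hva := fun i hi => hv i (Or.inl hi)
    have hvb := fun i hi => hv i (Or.inr hi)
    rw [sat_au, sat_au]
    constructor
    · intro H π hπ h0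
      obtain ⟨σ, hσ, hσ0, hσf⟩ := lift_path M₁ M₂ f h2 s π hπ h0
      obtain ⟨i, hbi, hai⟩ := H σ hσ hσ0
      refine ⟨i, ?_, fun j hj => ?_⟩
      · rw [← hσf i]; exact (ihb hvb (σ i)).1 hbi
      · rw [← hσf j]; exact (iha hva (σ j)).1 (hai j hj)
    · intro H σ hσ hσ0
      have hfp : isPath M₂ (fun j => f (σ j)) := fun j => h1 _ _ (hσ j)
      obtain ⟨i, hbi, hai⟩ := H _ hfp (by show f (σ 0) = f s; rw [hσ0])
      refine ⟨i, (ihb hvb (σ i)).2 hbi, fun j hj => (iha hva (σ j)).2 (hai j hj)⟩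
  | eu a b iha ihb =>
    intro hv s
    have hva := fun i hi => hv i (Or.inl hi)
    have hvb := fun i hi => hv i (Or.inr hi)
    rw [sat_eu, sat_eu]
    constructor
    · rintro ⟨σ, hσ, hσ0, i, hbi, hai⟩
      refine ⟨fun j => f (σ j), fun j => h1 _ _ (hσ j), by show f (σ 0) = f s; rw [hσ0],
        i, (ihb hvb (σ i)).1 hbi, fun j hj => (iha hva (σ j)).1 (hai j hj)⟩
    · rintro ⟨π, hπ, h0, i, hbi, hai⟩
      obtain ⟨σ, hσ, hσ0, hσf⟩ := lift_path M₁ M₂ f h2 s π hπ h0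
      refine ⟨σ, hσ, hσ0, i, ?_, fun j hj => ?_⟩
      · apply (ihb hvb (σ i)).2; rw [hσf i]; exact hbi
      · apply (iha hva (σ j)).2; rw [hσf j]; exact hai j hj

end CTLEmb
namespace CTLEmb

variable {S : Type}

/-- Single-variable valuation on the extended state space. -/
def pv : S ⊕ (S × ℕ × ℕ) → Prop
  | .inl _ => False
  | .inr (_, m, j) => 1 ≤ m ∧ j ≤ 2*m ∧ j % 2 = 0

/-- Transition relation of the extended model. -/
def relT (M : Kripke S) (n : ℕ) : S ⊕ (S × ℕ × ℕ) → S ⊕ (S × ℕ × ℕ) → Prop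
  | .inl s, .inl s' => M.rel s s'
  | .inl s, .inr (s', m, j) => s' = s ∧ j = 0 ∧ 1 ≤ m ∧ m ≤ n+1 ∧ (m = n+1 ∨ M.val (m-1) s)
  | .inr _, .inl _ => False
  | .inr (s,m,j), .inr (s',m',j') => s' = s ∧ m' = m ∧
      ((j < 2*m ∧ j' = j+1) ∨ (j = 0 ∧ 1 ≤ m ∧ j' = 2*m+1) ∨ (2*m ≤ j ∧ j' = j))

def bigModel (M : Kripke S) (n : ℕ) : Kripke (S ⊕ (S × ℕ × ℕ)) where
  rel := relT M n
  serial := by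
    rintro (s | ⟨s, m, j⟩)
    · obtain ⟨t, ht⟩ := M.serial s
      exact ⟨.inl t, ht⟩
    · by_cases h : j < 2*m
      · exact ⟨.inr (s,m,j+1), rfl, rfl, Or.inl ⟨h, rfl⟩⟩
      · exact ⟨.inr (s,m,j), rfl, rfl, Or.inr (Or.inr ⟨by omega, rfl⟩)⟩
  val := fun i w => i = 0 ∧ pv w

section Analysis

variable (M : Kripke S) (n : ℕ)

lemma relT_inl_elim {s : S} {w} (h : relT M n (.inl s) w) :
    (∃ s', w = .inl s' ∧ M.rel s s') ∨
      (∃ m, w = .inr (s,m,0) ∧ 1 ≤ m ∧ m ≤ n+1 ∧ (m = n+1 ∨ M.val (m-1) s)) := by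
  rcases w with s' | ⟨s', m, j⟩
  · exact Or.inl ⟨s', rfl, h⟩
  · obtain ⟨h1, h2, h3, h4, h5⟩ := h
    subst h1; subst h2
    exact Or.inr ⟨m, rfl, h3, h4, h5⟩

lemma relT_inr_elim {s : S} {m j : ℕ} {w} (h : relT M n (.inr (s,m,j)) w) :
    ∃ j', w = .inr (s,m,j') ∧
      ((j < 2*m ∧ j' = j+1) ∨ (j = 0 ∧ 1 ≤ m ∧ j' = 2*m+1) ∨ (2*m ≤ j ∧ j' = j)) := by
  rcases w with s' | ⟨s', m', j'⟩
  · exact absurd h (by exact fun h => h)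
  · obtain ⟨h1, h2, h3⟩ := h
    subst h1; subst h2
    exact ⟨j', rfl, h3⟩

lemma sat_p {w} : sat (bigModel M n) (.var 0) w ↔ pv w := by
  rw [sat_var]
  show (0 = 0 ∧ pv w) ↔ pv w
  simp

lemma fix_last {s : S} {m : ℕ} (hm : 1 ≤ m) :
    ∀ w, relT M n (.inr (s,m,2*m)) w → w = .inr (s,m,2*m) := by
  intro w h
  obtain ⟨j', rfl, hc⟩ := relT_inr_elim M n h
  rcases hc with ⟨h1, _⟩ | ⟨h1, _⟩ | ⟨_, h2⟩ <;> first | omega | (rw [h2])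

lemma fix_term {s : S} {m : ℕ} :
    ∀ w, relT M n (.inr (s,m,2*m+1)) w → w = .inr (s,m,2*m+1) := by
  intro w h
  obtain ⟨j', rfl, hc⟩ := relT_inr_elim M n h
  rcases hc with ⟨h1, _⟩ | ⟨h1, _⟩ | ⟨_, h2⟩ <;> first | omega | (rw [h2])

lemma agp_last {s : S} {m : ℕ} (hm : 1 ≤ m) :
    sat (bigModel M n) (CTL.ag (.var 0)) (.inr (s,m,2*m)) := by
  rw [satAg_iff]
  intro w hw
  have := rtg_fix (fix_last M n hm) hw
  subst this
  exact (sat_p M n).2 ⟨hm, le_refl _, by omega⟩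

lemma agnp_term {s : S} {m : ℕ} :
    sat (bigModel M n) (CTL.ag (CTL.neg (.var 0))) (.inr (s,m,2*m+1)) := by
  rw [satAg_iff]
  intro w hw
  have := rtg_fix (fix_term M n) hw
  subst this
  rw [sat_neg, sat_p]
  rintro ⟨h1, h2, h3⟩
  omega

lemma chi_pos : ∀ k (s : S) (m i : ℕ), 1 ≤ m → i ≤ m → k = m - i →
    sat (bigModel M n) (chi k) (.inr (s,m,2*i)) := by
  intro k
  induction k with
  | zero =>
    intro s m i hm hi hk
    have : i = m := by omega
    subst this
    rw [chi]
    exact agp_last M n hm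
  | succ k ih =>
    intro s m i hm hi hk
    have hilt : i < m := by omega
    rw [chi, sat_conj]
    constructor
    · exact (sat_p M n).2 ⟨hm, by omega, by omega⟩
    · rw [sat_ex]
      refine ⟨.inr (s,m,2*i+1), ⟨rfl, rfl, Or.inl ⟨by omega, rfl⟩⟩, ?_⟩
      rw [sat_conj]
      constructor
      · rw [sat_neg, sat_p]
        rintro ⟨h1, h2, h3⟩
        omega
      · rw [sat_ex]
        refine ⟨.inr (s,m,2*(i+1)), ⟨rfl, rfl, Or.inl ⟨by omega, by omega⟩⟩, ?_⟩
        exact ih s m (i+1) hm (by omega) (by omega)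

/-- Shape of reachable states. -/
def shapeT : S ⊕ (S × ℕ × ℕ) → Prop
  | .inl _ => True
  | .inr (_, m, j) => 1 ≤ m ∧ m ≤ n+1 ∧ j ≤ 2*m+1

lemma shape_closed {w w'} (hw : shapeT n w) (h : relT M n w w') : shapeT n w' := by
  rcases w with s | ⟨s, m, j⟩
  · rcases relT_inl_elim M n h with ⟨s', rfl, _⟩ | ⟨m, rfl, h1, h2, _⟩
    · trivial
    · exact ⟨h1, h2, by omega⟩
  · obtain ⟨hm1, hm2, hj⟩ := hw
    obtain ⟨j', rfl, hc⟩ := relT_inr_elim M n h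
    exact ⟨hm1, hm2, by omega⟩

lemma reach_shape {w₀ w} (hw₀ : shapeT n w₀)
    (h : Relation.ReflTransGen (relT M n) w₀ w) : shapeT n w := by
  induction h with
  | refl => exact hw₀
  | tail h1 h2 ih => exact shape_closed M n ih h2

lemma bigRel : (bigModel M n).rel = relT M n := rfl

lemma chi_neg : ∀ k w, shapeT n w → sat (bigModel M n) (chi k) w →
    ∃ (s : S) (m i : ℕ), w = .inr (s,m,2*i) ∧ 1 ≤ m ∧ m ≤ n+1 ∧ i ≤ m ∧ k = m - i := by
  intro k
  induction k with
  | zero =>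
    intro w hsh h
    rw [chi, satAg_iff] at h
    have hp := (sat_p M n).1 (h w .refl)
    rcases w with s | ⟨s, m, j⟩
    · exact absurd hp (by exact fun h => h)
    · obtain ⟨hm, hj, hev⟩ := hp
      obtain ⟨hm1, hm2, -⟩ := hsh
      have hjm : j = 2*m := by
        by_contra hc
        have hlt : j < 2*m := by omega
        have hrel : (bigModel M n).rel (.inr (s,m,j)) (.inr (s,m,j+1)) :=
          ⟨rfl, rfl, Or.inl ⟨hlt, rfl⟩⟩
        have := (sat_p M n).1 (h _ (Relation.ReflTransGen.refl.tail hrel))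
        obtain ⟨-, -, hev'⟩ := this
        omega
      exact ⟨s, m, m, by rw [hjm], hm, hm2, le_refl _, by omega⟩
  | succ k ih =>
    intro w hsh h
    rw [chi, sat_conj] at h
    obtain ⟨hp, hex⟩ := h
    have hp := (sat_p M n).1 hp
    rcases w with s | ⟨s, m, j⟩
    · exact absurd hp (by exact fun h => h)
    · obtain ⟨hm, hj, hev⟩ := hp
      obtain ⟨hm1, hm2, -⟩ := hsh
      rw [sat_ex] at hex
      obtain ⟨u, hrel, hu⟩ := hex
      rw [sat_conj] at hu
      obtain ⟨hnp, hex2⟩ := hu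
      rw [bigRel] at hrel
      have hjlt : j < 2*m := by
        by_contra hc
        have hj2m : j = 2*m := by omega
        subst hj2m
        have := fix_last M n hm u hrel
        subst this
        exact (sat_neg.1 hnp) ((sat_p M n).2 ⟨hm, by omega, by omega⟩)
      obtain ⟨j', rfl, hc⟩ := relT_inr_elim M n hrel
      rw [sat_ex] at hex2
      obtain ⟨v, hrel2, hv⟩ := hex2
      rw [bigRel] at hrel2
      rcases hc with ⟨-, hj'⟩ | ⟨hj0, -, hj'⟩ | ⟨hge, -⟩
      · -- u = (s,m,j+1)
        subst hj'
        obtain ⟨j'', rfl, hc2⟩ := relT_inr_elim M n hrel2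
        have hj'' : j'' = j + 2 := by omega
        subst hj''
        obtain ⟨s2, m2, i2, heq, hm2', hmn2, hi2, hk2⟩ :=
          ih (.inr (s,m,j+2)) (show shapeT n (.inr (s,m,j+2)) from ⟨hm, hm2, by omega⟩) hv
        simp only [Sum.inr.injEq, Prod.mk.injEq] at heq
        obtain ⟨rfl, rfl, hii⟩ := heq
        have hj2 : 2*(j/2) = j := by omega
        exact ⟨s, m, j/2, by rw [hj2], hm, hm2, by omega, by omega⟩
      · -- u = term
        subst hj'
        obtain ⟨j'', rfl, hc2⟩ := relT_inr_elim M n hrel2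
        have hj'' : j'' = 2*m+1 := by omega
        subst hj''
        obtain ⟨s2, m2, i2, heq, hm2', hmn2, hi2, hk2⟩ :=
          ih (.inr (s,m,2*m+1)) (show shapeT n (.inr (s,m,2*m+1)) from ⟨hm, hm2, by omega⟩) hv
        simp only [Sum.inr.injEq, Prod.mk.injEq] at heq
        omega
      · omega

lemma A_pos {s : S} {m : ℕ} (hm : 1 ≤ m) :
    sat (bigModel M n) (Aform m) (.inr (s,m,0)) := by
  rw [Aform, sat_conj]
  constructor
  · have := chi_pos M n m s m 0 hm (Nat.zero_le _) (by omega)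
    simpa using this
  · rw [sat_ex]
    refine ⟨.inr (s,m,2*m+1), ?_, agnp_term M n⟩
    exact ⟨rfl, rfl, Or.inr (Or.inl ⟨rfl, hm, rfl⟩)⟩

lemma A_neg {w} {m : ℕ} (hm : 1 ≤ m) (hsh : shapeT n w)
    (h : sat (bigModel M n) (Aform m) w) :
    ∃ s : S, w = .inr (s,m,0) ∧ m ≤ n+1 := by
  rw [Aform, sat_conj] at h
  obtain ⟨hchi, hex⟩ := h
  obtain ⟨s, m', i, rfl, hm1, hm2, hi, hk⟩ := chi_neg M n m _ hsh hchi
  have hilt : i < m' := by omega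
  rw [sat_ex] at hex
  obtain ⟨u, hrel, hagnp⟩ := hex
  rw [bigRel] at hrel
  obtain ⟨j', rfl, hc⟩ := relT_inr_elim M n hrel
  rw [satAg_iff] at hagnp
  have hnotodd : ¬ j' = 2*i + 1 := by
    intro hj'
    subst hj'
    have hrel2 : (bigModel M n).rel (.inr (s,m',2*i+1)) (.inr (s,m',2*i+2)) :=
      ⟨rfl, rfl, Or.inl ⟨by omega, rfl⟩⟩
    have := hagnp _ (Relation.ReflTransGen.refl.tail hrel2)
    rw [sat_neg, sat_p] at this
    exact this ⟨hm1, by omega, by omega⟩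
  rcases hc with ⟨-, hj'⟩ | ⟨hj0, -, hj'⟩ | ⟨hge, -⟩
  · omega
  · have hi0 : i = 0 := by omega
    subst hi0
    have hmm : m = m' := by omega
    subst hmm
    exact ⟨s, by norm_num, hm2⟩
  · omega

lemma B_inl {s : S} {m : ℕ} (hm : 1 ≤ m) (hmn : m ≤ n+1) :
    sat (bigModel M n) (Bform m) (.inl s) ↔ (m = n+1 ∨ M.val (m-1) s) := by
  rw [Bform, sat_ex]
  constructor
  · rintro ⟨u, hrel, hA⟩
    rw [bigRel] at hrel
    have hshu : shapeT n u := shape_closed M n (by trivial) hrel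
    obtain ⟨s2, heq, -⟩ := A_neg M n hm hshu hA
    subst heq
    rcases relT_inl_elim M n hrel with ⟨s', heq, -⟩ | ⟨m2, heq, h1, h2, h3⟩
    · exact absurd heq (by simp)
    · simp only [Sum.inr.injEq, Prod.mk.injEq] at heq
      obtain ⟨-, rfl, -⟩ := heq
      exact h3
  · intro h
    exact ⟨.inr (s,m,0), ⟨rfl, rfl, hm, hmn, h⟩, A_pos M n hm⟩

lemma B_not_inr {x : S × ℕ × ℕ} {m : ℕ} (hm : 1 ≤ m) (hsh : shapeT n (.inr x)) :
    ¬ sat (bigModel M n) (Bform m) (.inr x) := by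
  rw [Bform, sat_ex]
  rintro ⟨u, hrel, hA⟩
  rw [bigRel] at hrel
  have hshu : shapeT n u := shape_closed M n hsh hrel
  obtain ⟨s2, heq, -⟩ := A_neg M n hm hshu hA
  subst heq
  obtain ⟨sx, mx, jx⟩ := x
  obtain ⟨hmx, hmnx, hjx⟩ := hsh
  obtain ⟨j', heq, hc⟩ := relT_inr_elim M n hrel
  simp only [Sum.inr.injEq, Prod.mk.injEq] at heq
  obtain ⟨rfl, rfl, rfl⟩ := heq
  omega

end Analysis

end CTLEmb
namespace CTLEmb

variable {S : Type}

theorem forward (M : Kripke S) (φ : CTL) (s₀ : S) (h : sat M φ s₀) :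
    satisfiable (eFun φ) := by
  set n := encodeCTL φ + 1 with hn
  set N := bigModel M n with hN
  set N' := reval N n with hN'
  have hq_inl : ∀ s : S, N'.val (n+1) (.inl s) := by
    intro s
    rw [hN', reval_val N n (n+1) _ ⟨by omega, le_refl _⟩]
    exact (B_inl M n (by omega) (le_refl _)).2 (Or.inl rfl)
  have hq_inr : ∀ x, shapeT n (.inr x) → ¬ N'.val (n+1) (.inr x) := by
    intro x hsh
    rw [hN', reval_val N n (n+1) _ ⟨by omega, le_refl _⟩]
    exact B_not_inr M n (by omega) hsh
  have hshape : ∀ w, Relation.ReflTransGen N'.rel (.inl s₀) w → shapeT n w := by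
    intro w hw
    exact reach_shape M n (w₀ := .inl s₀) trivial hw
  have hser : ∀ w, Relation.ReflTransGen N'.rel (.inl s₀) w → N'.val (n+1) w →
      ∃ w', N'.rel w w' ∧ N'.val (n+1) w' := by
    intro w hw hq
    rcases w with s | x
    · obtain ⟨s', hs'⟩ := M.serial s
      exact ⟨.inl s', hs', hq_inl s'⟩
    · exact absurd hq (hq_inr x (hshape _ hw))
  have hcl : ∀ w, Relation.ReflTransGen N'.rel (.inl s₀) w → ¬ N'.val (n+1) w →
      ∀ w', N'.rel w w' → ¬ N'.val (n+1) w' := by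
    intro w hw hnq w' hrel hq'
    rcases w with s | x
    · exact hnq (hq_inl s)
    · rcases w' with s' | x'
      · exact hrel
      · exact hq_inr x' (shape_closed M n (hshape _ hw) hrel) hq'
  have hTheta : sat N' (Theta (n+1)) (.inl s₀) := by
    rw [Theta, sat_conj]
    refine ⟨hq_inl s₀, ?_⟩
    rw [satAg_iff]
    intro w hw
    rw [sat_iffc, sat_ex]
    constructor
    · rintro ⟨w', hrel, hq'⟩
      rcases w with s | x
      · exact hq_inl s
      · exfalso
        rcases w' with s' | x'
        · exact hrel
        · exact hq_inr x' (shape_closed M n (hshape _ hw) hrel) hq'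
    · intro hq
      rcases w with s | x
      · obtain ⟨s', hs'⟩ := M.serial s
        exact ⟨.inl s', hs', hq_inl s'⟩
      · exact absurd hq (hq_inr x (hshape _ hw))
  have hroot : Relation.ReflTransGen N'.rel (.inl s₀) (.inl s₀) ∧ N'.val (n+1) (.inl s₀) :=
    ⟨.refl, hq_inl s₀⟩
  set K := Kmod N' (.inl s₀) (n+1) hser with hK
  have hsatK : sat K φ ⟨.inl s₀, hroot⟩ := by
    refine (bisim K M (fun a => match a.1 with | .inl s => s | .inr x => x.1)
      ?_ ?_ φ ?_ _).2 h
    · rintro ⟨wa, hra, hqa⟩ ⟨wb, hrb, hqb⟩ hab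
      rcases wa with s | x
      · rcases wb with s' | x'
        · exact hab
        · exact absurd hqb (hq_inr x' (hshape _ hrb))
      · exact absurd hqa (hq_inr x (hshape _ hra))
    · rintro ⟨wa, hra, hqa⟩ c hac
      rcases wa with s | x
      · exact ⟨⟨.inl c, hra.tail hac, hq_inl c⟩, hac, rfl⟩
      · exact absurd hqa (hq_inr x (hshape _ hra))
    · rintro i hi ⟨wa, hra, hqa⟩
      have hile : i + 1 ≤ n := by
        have := occ_le_encode hi
        omega
      rcases wa with s | x
      · show N'.val (i+1) (.inl s) ↔ M.val i s
        rw [hN', reval_val N n (i+1) _ ⟨by omega, by omega⟩,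
          B_inl M n (by omega) (by omega)]
        constructor
        · rintro (h1 | h1)
          · omega
          · simpa using h1
        · intro h1
          exact Or.inr (by simpa using h1)
      · exact absurd hqa (hq_inr x (hshape _ hra))
  have htr : sat N' (tr (n+1) φ) (.inl s₀) :=
    (rel_main N' (.inl s₀) (n+1) hser hcl φ (.inl s₀) hroot).2 hsatK
  have hfin : sat N (eFun φ) (.inl s₀) := by
    rw [eFun, sat_sigma]
    exact sat_conj.2 ⟨hTheta, htr⟩
  exact ⟨_, N, _, hfin⟩

theorem backward (φ : CTL) : satisfiable (eFun φ) → satisfiable φ := by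
  rintro ⟨S, N0, t, h⟩
  set n := encodeCTL φ + 1 with hn
  rw [eFun, sat_sigma] at h
  set N' := reval N0 n with hN'
  rw [sat_conj] at h
  obtain ⟨hTheta, htr⟩ := h
  rw [Theta, sat_conj] at hTheta
  obtain ⟨hqt, hAG⟩ := hTheta
  rw [satAg_iff] at hAG
  have hiff : ∀ w, Relation.ReflTransGen N'.rel t w →
      ((∃ w', N'.rel w w' ∧ N'.val (n+1) w') ↔ N'.val (n+1) w) := by
    intro w hw
    have := hAG w hw
    rw [sat_iffc, sat_ex] at this
    exact this
  have hser : ∀ w, Relation.ReflTransGen N'.rel t w → N'.val (n+1) w →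
      ∃ w', N'.rel w w' ∧ N'.val (n+1) w' := fun w hw hq => (hiff w hw).2 hq
  have hcl : ∀ w, Relation.ReflTransGen N'.rel t w → ¬ N'.val (n+1) w →
      ∀ w', N'.rel w w' → ¬ N'.val (n+1) w' := by
    intro w hw hnq w' hrel hq'
    exact hnq ((hiff w hw).1 ⟨w', hrel, hq'⟩)
  have hroot : Relation.ReflTransGen N'.rel t t ∧ N'.val (n+1) t := ⟨.refl, hqt⟩
  have := (rel_main N' t (n+1) hser hcl φ t hroot).1 htr
  exact ⟨_, _, _, this⟩

theorem eFun_iff (φ : CTL) : satisfiable (eFun φ) ↔ satisfiable φ := by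
  constructor
  · exact backward φ
  · rintro ⟨S, M, s₀, h⟩
    exact forward M φ s₀ h

end CTLEmb
namespace CTLEmb

/-! ### Code-level helpers -/

def cVar (i : ℕ) : ℕ := Nat.pair 0 i
def cBot : ℕ := Nat.pair 1 0
def cImp (a b : ℕ) : ℕ := Nat.pair 2 (Nat.pair a b)
def cAx (a : ℕ) : ℕ := Nat.pair 3 a
def cAu (a b : ℕ) : ℕ := Nat.pair 4 (Nat.pair a b)
def cEu (a b : ℕ) : ℕ := Nat.pair 5 (Nat.pair a b)
def cNeg (a : ℕ) : ℕ := cImp a cBot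
def cConj (a b : ℕ) : ℕ := cNeg (cImp a (cNeg b))
def cIff (a b : ℕ) : ℕ := cConj (cImp a b) (cImp b a)
def cEx (a : ℕ) : ℕ := cNeg (cAx (cNeg a))
def cAg (a : ℕ) : ℕ := cNeg (cEu (cNeg cBot) (cNeg a))

lemma encode_conj (a b : CTL) :
    encodeCTL (CTL.conj a b) = cConj (encodeCTL a) (encodeCTL b) := rfl
lemma encode_ag (a : CTL) : encodeCTL (CTL.ag a) = cAg (encodeCTL a) := rfl
lemma encode_ex (a : CTL) : encodeCTL (CTL.ex a) = cEx (encodeCTL a) := rfl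
lemma encode_iffc (a b : CTL) :
    encodeCTL (CTL.iffc a b) = cIff (encodeCTL a) (encodeCTL b) := rfl

def cChi : ℕ → ℕ
  | 0 => cAg (cVar 0)
  | k+1 => cConj (cVar 0) (cEx (cConj (cNeg (cVar 0)) (cEx (cChi k))))

lemma encode_imp (a b : CTL) :
    encodeCTL (.imp a b) = cImp (encodeCTL a) (encodeCTL b) := rfl
lemma encode_axc (a : CTL) : encodeCTL (.ax a) = cAx (encodeCTL a) := rfl
lemma encode_auc (a b : CTL) :
    encodeCTL (.au a b) = cAu (encodeCTL a) (encodeCTL b) := rfl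
lemma encode_euc (a b : CTL) :
    encodeCTL (.eu a b) = cEu (encodeCTL a) (encodeCTL b) := rfl

lemma encode_chi : ∀ k, encodeCTL (chi k) = cChi k := by
  intro k
  induction k with
  | zero => rfl
  | succ k ih =>
    show encodeCTL (CTL.conj _ _) = _
    rw [cChi, ← ih]
    rfl

def cB (m : ℕ) : ℕ := cEx (cConj (cChi m) (cEx (cAg (cNeg (cVar 0)))))

lemma encode_B (m : ℕ) : encodeCTL (Bform m) = cB m := by
  rw [Bform, Aform, cB, ← encode_chi]
  rfl

def cThetaS (nn : ℕ) : ℕ :=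
  cConj (cB (nn+1)) (cAg (cIff (cEx (cB (nn+1))) (cB (nn+1))))

lemma sigma_theta (nn : ℕ) : sigmaSub nn (Theta (nn+1)) =
    CTL.conj (Bform (nn+1))
      (CTL.ag (CTL.iffc (CTL.ex (Bform (nn+1))) (Bform (nn+1)))) := by
  have hcond : 1 ≤ nn + 1 ∧ nn + 1 ≤ nn + 1 := ⟨by omega, le_refl _⟩
  simp [Theta, CTL.conj, CTL.neg, CTL.iffc, CTL.ex, CTL.ag, CTL.ef, CTL.top,
    sigmaSub, hcond]

lemma encode_thetaS (nn : ℕ) :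
    encodeCTL (sigmaSub nn (Theta (nn+1))) = cThetaS nn := by
  rw [sigma_theta, encode_conj, encode_ag, encode_iffc, encode_ex, encode_B, cThetaS]

/-! ### Pairing bounds -/

lemma lt_pair_right {a : ℕ} (b : ℕ) (h : 1 ≤ a) : b < Nat.pair a b := by
  rw [Nat.pair]
  split
  · rename_i hab
    nlinarith
  · omega

lemma unpair_snd_lt {m : ℕ} (h : 1 ≤ m.unpair.1) : m.unpair.2 < m := by
  conv_rhs => rw [← Nat.pair_unpair m]
  exact lt_pair_right _ h

/-! ### The code-level translation -/

def stC (nn : ℕ) (m : ℕ) : ℕ :=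
  if m.unpair.1 = 0 then (if m.unpair.2 ≤ nn then cB (m.unpair.2 + 1) else cVar (m.unpair.2 + 1))
  else if m.unpair.1 = 1 then cBot
  else if m.unpair.1 = 2 then
    cImp (stC nn m.unpair.2.unpair.1) (stC nn m.unpair.2.unpair.2)
  else if m.unpair.1 = 3 then cAx (cImp (cB (nn+1)) (stC nn m.unpair.2))
  else if m.unpair.1 = 4 then
    cAu (cImp (cB (nn+1)) (stC nn m.unpair.2.unpair.1))
        (cImp (cB (nn+1)) (stC nn m.unpair.2.unpair.2))
  else if m.unpair.1 = 5 then
    cEu (stC nn m.unpair.2.unpair.1) (cConj (cB (nn+1)) (stC nn m.unpair.2.unpair.2))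
  else m
termination_by m
decreasing_by
  all_goals {
    have h1 : 1 ≤ m.unpair.1 := by omega
    have h2 := unpair_snd_lt h1
    first
      | exact lt_of_le_of_lt (Nat.unpair_left_le _) h2
      | exact lt_of_le_of_lt (Nat.unpair_right_le _) h2
      | exact h2
  }

lemma stC_var (nn i : ℕ) : stC nn (Nat.pair 0 i) =
    (if i ≤ nn then cB (i+1) else cVar (i+1)) := by
  rw [stC]
  simp only [Nat.unpair_pair]
  rw [if_pos trivial]

lemma stC_bot (nn : ℕ) : stC nn (Nat.pair 1 0) = cBot := by
  rw [stC]
  simp only [Nat.unpair_pair]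
  rw [if_pos trivial, if_neg (by decide)]

lemma stC_imp (nn a b : ℕ) : stC nn (Nat.pair 2 (Nat.pair a b)) =
    cImp (stC nn a) (stC nn b) := by
  rw [stC]
  simp only [Nat.unpair_pair]
  rw [if_pos trivial, if_neg (by decide), if_neg (by decide)]

lemma stC_ax (nn a : ℕ) : stC nn (Nat.pair 3 a) =
    cAx (cImp (cB (nn+1)) (stC nn a)) := by
  rw [stC]
  simp only [Nat.unpair_pair]
  rw [if_pos trivial, if_neg (by decide), if_neg (by decide), if_neg (by decide)]

lemma stC_au (nn a b : ℕ) : stC nn (Nat.pair 4 (Nat.pair a b)) =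
    cAu (cImp (cB (nn+1)) (stC nn a)) (cImp (cB (nn+1)) (stC nn b)) := by
  rw [stC]
  simp only [Nat.unpair_pair]
  rw [if_pos trivial, if_neg (by decide), if_neg (by decide), if_neg (by decide), if_neg (by decide)]

lemma stC_eu (nn a b : ℕ) : stC nn (Nat.pair 5 (Nat.pair a b)) =
    cEu (stC nn a) (cConj (cB (nn+1)) (stC nn b)) := by
  rw [stC]
  simp only [Nat.unpair_pair]
  rw [if_pos trivial, if_neg (by decide), if_neg (by decide), if_neg (by decide), if_neg (by decide), if_neg (by decide)]

lemma sigma_varq (nn : ℕ) : sigmaSub nn (.var (nn+1)) = Bform (nn+1) := by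
  rw [sigmaSub, if_pos (by omega : 1 ≤ nn + 1 ∧ nn + 1 ≤ nn + 1)]

lemma stC_encode (nn : ℕ) :
    ∀ φ, stC nn (encodeCTL φ) = encodeCTL (sigmaSub nn (tr (nn+1) φ)) := by
  intro φ
  induction φ with
  | var i =>
    rw [encodeCTL, stC_var]
    by_cases hi : i ≤ nn
    · rw [if_pos hi, tr, sigmaSub, if_pos (by omega : 1 ≤ i + 1 ∧ i + 1 ≤ nn + 1), encode_B]
    · rw [if_neg hi, tr, sigmaSub, if_neg (by omega : ¬ (1 ≤ i + 1 ∧ i + 1 ≤ nn + 1))]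
      rfl
  | bot => rw [encodeCTL, stC_bot]; rfl
  | imp a b iha ihb =>
    rw [encodeCTL, stC_imp, iha, ihb]
    rfl
  | ax a iha =>
    rw [encodeCTL, stC_ax, iha]
    show _ = encodeCTL (.ax (.imp (sigmaSub nn (.var (nn+1))) (sigmaSub nn (tr (nn+1) a))))
    rw [sigma_varq, encode_axc, encode_imp, encode_B]
  | au a b iha ihb =>
    rw [encodeCTL, stC_au, iha, ihb]
    show _ = encodeCTL (.au (.imp (sigmaSub nn (.var (nn+1))) (sigmaSub nn (tr (nn+1) a)))
      (.imp (sigmaSub nn (.var (nn+1))) (sigmaSub nn (tr (nn+1) b))))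
    rw [sigma_varq, encode_auc, encode_imp, encode_imp, encode_B]
  | eu a b iha ihb =>
    rw [encodeCTL, stC_eu, iha, ihb]
    show _ = encodeCTL (.eu (sigmaSub nn (tr (nn+1) a))
      (CTL.conj (sigmaSub nn (.var (nn+1))) (sigmaSub nn (tr (nn+1) b))))
    rw [sigma_varq, encode_euc, encode_conj, encode_B]

end CTLEmb
namespace CTLEmb

section PrimrecStuff

variable {α : Type} [Primcodable α] {f g : α → ℕ}

lemma pPair (hf : Primrec f) (hg : Primrec g) : Primrec fun z => Nat.pair (f z) (g z) :=
  Primrec₂.natPair.comp hf hg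

lemma pImp (hf : Primrec f) (hg : Primrec g) : Primrec fun z => cImp (f z) (g z) :=
  pPair (Primrec.const 2) (pPair hf hg)

lemma pNeg (hf : Primrec f) : Primrec fun z => cNeg (f z) :=
  pImp hf (Primrec.const cBot)

lemma pConj (hf : Primrec f) (hg : Primrec g) : Primrec fun z => cConj (f z) (g z) :=
  pNeg (pImp hf (pNeg hg))

lemma pIff (hf : Primrec f) (hg : Primrec g) : Primrec fun z => cIff (f z) (g z) :=
  pConj (pImp hf hg) (pImp hg hf)

lemma pAx (hf : Primrec f) : Primrec fun z => cAx (f z) :=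
  pPair (Primrec.const 3) hf

lemma pEx (hf : Primrec f) : Primrec fun z => cEx (f z) :=
  pNeg (pAx (pNeg hf))

lemma pAu (hf : Primrec f) (hg : Primrec g) : Primrec fun z => cAu (f z) (g z) :=
  pPair (Primrec.const 4) (pPair hf hg)

lemma pEu (hf : Primrec f) (hg : Primrec g) : Primrec fun z => cEu (f z) (g z) :=
  pPair (Primrec.const 5) (pPair hf hg)

lemma pAg (hf : Primrec f) : Primrec fun z => cAg (f z) :=
  pNeg (pEu (Primrec.const (cNeg cBot)) (pNeg hf))

lemma pVar (hf : Primrec f) : Primrec fun z => cVar (f z) :=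
  pPair (Primrec.const 0) hf

lemma primrec_cChi : Primrec cChi := by
  have step : Primrec fun z : ℕ => cConj (cVar 0) (cEx (cConj (cNeg (cVar 0)) (cEx z))) :=
    pConj (Primrec.const (cVar 0))
      (pEx (pConj (Primrec.const (cNeg (cVar 0))) (pEx Primrec.id)))
  have h : Primrec (fun k : ℕ => Nat.rec (motive := fun _ => ℕ) (cAg (cVar 0))
      (fun _ ih => cConj (cVar 0) (cEx (cConj (cNeg (cVar 0)) (cEx ih)))) k) :=
    Primrec.nat_rec₁ _ ((step.comp Primrec.snd).to₂)
  refine h.of_eq fun k => ?_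
  induction k with
  | zero => rfl
  | succ k ih => rw [cChi, ← ih]

lemma primrec_cB : Primrec cB :=
  pEx (pConj primrec_cChi (Primrec.const (cEx (cAg (cNeg (cVar 0))))))

lemma primrec_cThetaS : Primrec cThetaS := by
  have hb : Primrec fun nn : ℕ => cB (nn + 1) := primrec_cB.comp Primrec.succ
  exact pConj hb (pAg (pIff (pEx hb) hb))

/-- Step function for strong recursion. -/
def gAux (p : ℕ × List ℕ) : ℕ :=
  if p.2.length.unpair.1 = 0 then
    (if p.2.length.unpair.2 ≤ p.1 then cB (p.2.length.unpair.2 + 1)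
     else cVar (p.2.length.unpair.2 + 1))
  else if p.2.length.unpair.1 = 1 then cBot
  else if p.2.length.unpair.1 = 2 then
    cImp ((p.2[p.2.length.unpair.2.unpair.1]?).getD 0)
      ((p.2[p.2.length.unpair.2.unpair.2]?).getD 0)
  else if p.2.length.unpair.1 = 3 then
    cAx (cImp (cB (p.1+1)) ((p.2[p.2.length.unpair.2]?).getD 0))
  else if p.2.length.unpair.1 = 4 then
    cAu (cImp (cB (p.1+1)) ((p.2[p.2.length.unpair.2.unpair.1]?).getD 0))
      (cImp (cB (p.1+1)) ((p.2[p.2.length.unpair.2.unpair.2]?).getD 0))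
  else if p.2.length.unpair.1 = 5 then
    cEu ((p.2[p.2.length.unpair.2.unpair.1]?).getD 0)
      (cConj (cB (p.1+1)) ((p.2[p.2.length.unpair.2.unpair.2]?).getD 0))
  else p.2.length

lemma primrec_gAux : Primrec gAux := by
  have hn : Primrec fun p : ℕ × List ℕ => p.1 := Primrec.fst
  have hl : Primrec fun p : ℕ × List ℕ => p.2 := Primrec.snd
  have hm : Primrec fun p : ℕ × List ℕ => p.2.length := Primrec.list_length.comp hl
  have ht : Primrec fun p : ℕ × List ℕ => p.2.length.unpair.1 :=
    Primrec.fst.comp (Primrec.unpair.comp hm)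
  have hz : Primrec fun p : ℕ × List ℕ => p.2.length.unpair.2 :=
    Primrec.snd.comp (Primrec.unpair.comp hm)
  have hz1 : Primrec fun p : ℕ × List ℕ => p.2.length.unpair.2.unpair.1 :=
    Primrec.fst.comp (Primrec.unpair.comp hz)
  have hz2 : Primrec fun p : ℕ × List ℕ => p.2.length.unpair.2.unpair.2 :=
    Primrec.snd.comp (Primrec.unpair.comp hz)
  have hg1 : Primrec fun p : ℕ × List ℕ => (p.2[p.2.length.unpair.2.unpair.1]?).getD 0 :=
    Primrec.option_getD.comp (Primrec.list_getElem?.comp hl hz1) (Primrec.const 0)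
  have hg2 : Primrec fun p : ℕ × List ℕ => (p.2[p.2.length.unpair.2.unpair.2]?).getD 0 :=
    Primrec.option_getD.comp (Primrec.list_getElem?.comp hl hz2) (Primrec.const 0)
  have hgz : Primrec fun p : ℕ × List ℕ => (p.2[p.2.length.unpair.2]?).getD 0 :=
    Primrec.option_getD.comp (Primrec.list_getElem?.comp hl hz) (Primrec.const 0)
  have hBq : Primrec fun p : ℕ × List ℕ => cB (p.1 + 1) :=
    primrec_cB.comp (Primrec.succ.comp hn)
  have ceq : ∀ k : ℕ, PrimrecPred fun p : ℕ × List ℕ => p.2.length.unpair.1 = k :=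
    fun k => PrimrecRel.comp Primrec.eq ht (Primrec.const k)
  have cle : PrimrecPred fun p : ℕ × List ℕ => p.2.length.unpair.2 ≤ p.1 :=
    PrimrecRel.comp Primrec.nat_le hz hn
  exact Primrec.ite (ceq 0)
    (Primrec.ite cle (primrec_cB.comp (Primrec.succ.comp hz)) (pVar (Primrec.succ.comp hz)))
    (Primrec.ite (ceq 1) (Primrec.const cBot)
      (Primrec.ite (ceq 2) (pImp hg1 hg2)
        (Primrec.ite (ceq 3) (pAx (pImp hBq hgz))
          (Primrec.ite (ceq 4) (pAu (pImp hBq hg1) (pImp hBq hg2))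
            (Primrec.ite (ceq 5) (pEu hg1 (pConj hBq hg2)) hm)))))

lemma gAux_spec (nn m : ℕ) : gAux (nn, (List.range m).map (stC nn)) = stC nn m := by
  have hlen : ((List.range m).map (stC nn)).length = m := by
    rw [List.length_map, List.length_range]
  have hget : ∀ i, i < m → (((List.range m).map (stC nn))[i]?).getD 0 = stC nn i := by
    intro i hi
    simp [hi]
  rw [gAux]
  simp only [hlen]
  rw [stC]
  by_cases h0 : m.unpair.1 = 0
  · rw [if_pos h0, if_pos h0]
  rw [if_neg h0, if_neg h0]
  by_cases h1 : m.unpair.1 = 1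
  · rw [if_pos h1, if_pos h1]
  rw [if_neg h1, if_neg h1]
  have hz_lt : m.unpair.2 < m := unpair_snd_lt (by omega)
  have hz1_lt : m.unpair.2.unpair.1 < m := lt_of_le_of_lt (Nat.unpair_left_le _) hz_lt
  have hz2_lt : m.unpair.2.unpair.2 < m := lt_of_le_of_lt (Nat.unpair_right_le _) hz_lt
  by_cases h2 : m.unpair.1 = 2
  · rw [if_pos h2, if_pos h2, hget _ hz1_lt, hget _ hz2_lt]
  rw [if_neg h2, if_neg h2]
  by_cases h3 : m.unpair.1 = 3
  · rw [if_pos h3, if_pos h3, hget _ hz_lt]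
  rw [if_neg h3, if_neg h3]
  by_cases h4 : m.unpair.1 = 4
  · rw [if_pos h4, if_pos h4, hget _ hz1_lt, hget _ hz2_lt]
  rw [if_neg h4, if_neg h4]
  by_cases h5 : m.unpair.1 = 5
  · rw [if_pos h5, if_pos h5, hget _ hz1_lt, hget _ hz2_lt]
  rw [if_neg h5, if_neg h5]

lemma primrec_stC : Primrec₂ stC := by
  apply Primrec.nat_strong_rec stC (g := fun a l => some (gAux (a, l)))
  · exact Primrec.option_some.comp primrec_gAux
  · intro a m
    rw [gAux_spec]

/-- The code-level translation function. -/
def fFun (m : ℕ) : ℕ := cConj (cThetaS (m+1)) (stC (m+1) m)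

lemma primrec_fFun : Primrec fFun :=
  pConj (primrec_cThetaS.comp Primrec.succ) (primrec_stC.comp Primrec.succ Primrec.id)

lemma sigma_conj (nn : ℕ) (a b : CTL) :
    sigmaSub nn (CTL.conj a b) = CTL.conj (sigmaSub nn a) (sigmaSub nn b) := rfl

lemma fFun_spec (φ : CTL) : fFun (encodeCTL φ) = encodeCTL (eFun φ) := by
  rw [fFun, eFun, sigma_conj, encode_conj, encode_thetaS, stC_encode]

end PrimrecStuff

end CTLEmb
/-- There is a computable function e mapping every CTL formula φ to a formula
e(φ) in at most one propositional variable (the variable p = var 0) such that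
e(φ) is satisfiable iff φ is satisfiable. -/
theorem ctl_single_variable_embedding :
    ∃ (e : CTL → CTL) (f : ℕ → ℕ), Computable f ∧
      (∀ φ, f (encodeCTL φ) = encodeCTL (e φ)) ∧
      (∀ φ, (∀ q, occurs q (e φ) → q = 0) ∧ (satisfiable (e φ) ↔ satisfiable φ)) := by
  refine ⟨CTLEmb.eFun, CTLEmb.fFun, CTLEmb.primrec_fFun.to_comp, CTLEmb.fFun_spec, ?_⟩
  intro φ
  exact ⟨fun q h => CTLEmb.occ_eFun h, CTLEmb.eFun_iff φ⟩
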